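/- (Lemma 1, algebraic form.) Let α > 0. If sec ≥ α and Ric(X,X) < n α ‖X‖² for every nonzero X ∈ E, then Q̊(φ) > 0 for every nonzero traceless symmetric bilinear form φ on E. If instead sec ≥ α and Ric(X,X) ≤ n α ‖X‖² for every X ∈ E, then Q̊(φ) ≥ 0 for every traceless symmetric bilinear form φ on E. -/

import Mathlib

open scoped RealInnerProductSpace

set_option maxHeartbeats 1000000

lemma sum_diag_eq {E : Type*} [NormedAddCommGroup E] [InnerProductSpace ℝ E]
    {n : ℕ} (e f : OrthonormalBasis (Fin n) ℝ E) (B : E →ₗ[ℝ] E →ₗ[ℝ] ℝ) :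
    ∑ i, B (f i) (f i) = ∑ i, B (e i) (e i) := by
  have step : ∀ a, B (f a) (f a)
      = ∑ i, ∑ j, ⟪e i, f a⟫ * (⟪e j, f a⟫ * B (e i) (e j)) := by
    intro a
    conv_lhs => rw [← e.sum_repr (f a)]
    simp [map_sum, Finset.mul_sum, OrthonormalBasis.repr_apply_apply, mul_assoc]
    rw [Finset.sum_comm]
    exact Finset.sum_congr rfl fun i _ => Finset.sum_congr rfl fun j _ => by ring
  calc ∑ a, B (f a) (f a)
      = ∑ a, ∑ i, ∑ j, ⟪e i, f a⟫ * (⟪e j, f a⟫ * B (e i) (e j)) := by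
        exact Finset.sum_congr rfl fun a _ => step a
    _ = ∑ i, ∑ j, (∑ a, ⟪e i, f a⟫ * ⟪f a, e j⟫) * B (e i) (e j) := by
        rw [Finset.sum_comm]
        refine Finset.sum_congr rfl fun i _ => ?_
        rw [Finset.sum_comm]
        refine Finset.sum_congr rfl fun j _ => ?_
        rw [Finset.sum_mul]
        refine Finset.sum_congr rfl fun a _ => ?_
        rw [real_inner_comm (f a) (e j)]
        ring
    _ = ∑ i, ∑ j, (if i = j then (1:ℝ) else 0) * B (e i) (e j) := by
        refine Finset.sum_congr rfl fun i _ => Finset.sum_congr rfl fun j _ => ?_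
        rw [f.sum_inner_mul_inner, orthonormal_iff_ite.mp e.orthonormal]
    _ = ∑ i, B (e i) (e i) := by
        simp

lemma stmt4_core {E : Type*} [NormedAddCommGroup E] [InnerProductSpace ℝ E]
    {n : ℕ} (e : OrthonormalBasis (Fin n) ℝ E)
    (R : E →ₗ[ℝ] E →ₗ[ℝ] E →ₗ[ℝ] E →ₗ[ℝ] ℝ)
    (hR1 : ∀ X Y Z W : E, R X Y Z W = - R Y X Z W)
    (hR2 : ∀ X Y Z W : E, R X Y Z W = - R X Y W Z)
    (α : ℝ)
    (hsec : ∀ X Y : E, α * (‖X‖ ^ 2 * ‖Y‖ ^ 2 - ⟪X, Y⟫ ^ 2) ≤ R X Y X Y)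
    (φ : E →ₗ[ℝ] E →ₗ[ℝ] ℝ) (hφ : ∀ X Y : E, φ X Y = φ Y X)
    (htrφ : (∑ i, φ (e i) (e i)) = 0) :
    ∃ (lam : Fin n → ℝ) (v : Fin n → E),
      (∀ a, ‖v a‖ = 1) ∧
      (φ ≠ 0 → ∃ a, lam a ≠ 0) ∧
      (n : ℝ) * α * (∑ a, lam a ^ 2) - ∑ a, lam a ^ 2 * (∑ m, R (e m) (v a) (e m) (v a))
        ≤ ∑ i, ∑ j, ∑ k, ∑ l, R (e i) (e k) (e l) (e j) * φ (e k) (e l) * φ (e i) (e j) := by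
  haveI : FiniteDimensional ℝ E := e.toBasis.finiteDimensional_of_finite
  have hfr : Module.finrank ℝ E = n := by
    rw [Module.finrank_eq_card_basis e.toBasis]; simp
  -- the symmetric operator associated to φ
  set A : E →ₗ[ℝ] E :=
    { toFun := fun X => ∑ j, φ X (e j) • e j,
      map_add' := by intro x y; simp [add_smul, Finset.sum_add_distrib],
      map_smul' := by intro c x; simp [smul_smul, Finset.smul_sum] } with hAdef
  have hAapply : ∀ X, A X = ∑ j, φ X (e j) • e j := fun X => rfl
  have hA : ∀ X Y : E, ⟪A X, Y⟫ = φ X Y := by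
    intro X Y
    rw [hAapply]
    rw [sum_inner]
    conv_rhs => rw [← e.sum_repr Y]
    simp [real_inner_smul_left, OrthonormalBasis.repr_apply_apply, mul_comm]
  have hAsym : A.IsSymmetric := by
    intro X Y
    show ⟪A X, Y⟫ = ⟪X, A Y⟫
    rw [hA X Y, hφ X Y, ← hA Y X, real_inner_comm]
  set v : OrthonormalBasis (Fin n) ℝ E := hAsym.eigenvectorBasis hfr with hvdef
  set lam : Fin n → ℝ := fun a => hAsym.eigenvalues hfr a with hlamdef
  have hv : ∀ a, A (v a) = lam a • v a := fun a => hAsym.apply_eigenvectorBasis hfr a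
  have hvnorm : ∀ a, ‖v a‖ = 1 := fun a => v.orthonormal.1 a
  have hvinner : ∀ a b, a ≠ b → ⟪v a, v b⟫ = 0 := fun a b hab => v.orthonormal.2 hab
  -- nonvanishing of lam when φ ≠ 0
  have hlamne : φ ≠ 0 → ∃ a, lam a ≠ 0 := by
    intro hne
    by_contra hc
    push_neg at hc
    apply hne
    have hA0 : ∀ X, A X = 0 := by
      intro X
      conv_lhs => rw [← v.sum_repr X]
      simp [map_sum, map_smul, hv, hc]
    ext X Y
    have := hA X Y
    rw [hA0 X] at this
    simp only [inner_zero_left] at this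
    simpa using this.symm
  refine ⟨lam, fun a => v a, hvnorm, hlamne, ?_⟩
  simp only []
  -- sectional curvatures in the eigenbasis
  set s : Fin n → Fin n → ℝ := fun a b => R (v a) (v b) (v a) (v b) with hsdef
  have hssymm : ∀ a b, s a b = s b a := by
    intro a b
    simp only [hsdef]
    rw [hR1 (v a) (v b) (v a) (v b), hR2 (v b) (v a) (v a) (v b)]
    ring
  have hsdiag : ∀ a, s a a = 0 := by
    intro a
    have h := hR1 (v a) (v a) (v a) (v a)
    simp only [hsdef]
    linarith
  have hsge : ∀ a b, a ≠ b → α ≤ s a b := by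
    intro a b hab
    have h := hsec (v a) (v b)
    rw [hvnorm, hvnorm, hvinner a b hab] at h
    simpa using h
  -- Ricci curvature change of basis
  have hricv : ∀ X : E, (∑ m, R (e m) X (e m) X) = ∑ b, R (v b) X (v b) X := by
    intro X
    let B : E →ₗ[ℝ] E →ₗ[ℝ] ℝ := LinearMap.mk₂ ℝ (fun Y Z => R Y X Z X)
      (by intros; simp) (by intros; simp) (by intros; simp) (by intros; simp)
    have h := sum_diag_eq e v B
    simpa [B] using h.symm
  have hric : ∀ a, (∑ m, R (e m) (v a) (e m) (v a)) = ∑ b, s b a := fun a => hricv (v a)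
  -- trace of φ in the eigenbasis
  have htr0 : ∑ a, lam a = 0 := by
    have h := sum_diag_eq e v φ
    have h2 : ∀ a, φ (v a) (v a) = lam a := by
      intro a
      rw [← hA, hv, real_inner_smul_left, real_inner_self_eq_norm_sq, hvnorm]
      simp
    calc ∑ a, lam a = ∑ a, φ (v a) (v a) := Finset.sum_congr rfl fun a _ => (h2 a).symm
      _ = 0 := by rw [h, htrφ]
  -- the quadratic form in operator form
  have hexp : ∀ i k : Fin n,
      (∑ j, ∑ l, R (e i) (e k) (e l) (e j) * φ (e k) (e l) * φ (e i) (e j))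
        = R (e i) (e k) (A (e k)) (A (e i)) := by
    intro i k
    rw [hAapply (e k), hAapply (e i)]
    simp only [map_sum, map_smul, smul_eq_mul, LinearMap.sum_apply, LinearMap.smul_apply,
      Finset.mul_sum, Finset.sum_mul]
    exact Finset.sum_congr rfl fun j _ => Finset.sum_congr rfl fun l _ => by ring
  have hquad1 : (∑ i, ∑ j, ∑ k, ∑ l, R (e i) (e k) (e l) (e j) * φ (e k) (e l) * φ (e i) (e j))
      = ∑ i, ∑ k, R (e i) (e k) (A (e k)) (A (e i)) := by
    refine Finset.sum_congr rfl fun i _ => ?_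
    calc (∑ j, ∑ k, ∑ l, R (e i) (e k) (e l) (e j) * φ (e k) (e l) * φ (e i) (e j))
        = ∑ k, ∑ j, ∑ l, R (e i) (e k) (e l) (e j) * φ (e k) (e l) * φ (e i) (e j) :=
          Finset.sum_comm
      _ = ∑ k, R (e i) (e k) (A (e k)) (A (e i)) :=
          Finset.sum_congr rfl fun k _ => hexp i k
  have hquad2 : (∑ i, ∑ k, R (e i) (e k) (A (e k)) (A (e i)))
      = ∑ a, ∑ b, R (v a) (v b) (A (v b)) (A (v a)) := by
    have inner_cb : ∀ X : E, (∑ k, R X (e k) (A (e k)) (A X)) = ∑ b, R X (v b) (A (v b)) (A X) := by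
      intro X
      let B : E →ₗ[ℝ] E →ₗ[ℝ] ℝ := LinearMap.mk₂ ℝ (fun Y Z => R X Y (A Z) (A X))
        (by intros; simp) (by intros; simp) (by intros; simp) (by intros; simp)
      have h := sum_diag_eq e v B
      simpa [B] using h.symm
    let B2 : E →ₗ[ℝ] E →ₗ[ℝ] ℝ := LinearMap.mk₂ ℝ (fun X W => ∑ b, R X (v b) (A (v b)) (A W))
      (by intros; simp [Finset.sum_add_distrib]) (by intros; simp [Finset.mul_sum])
      (by intros; simp [Finset.sum_add_distrib]) (by intros; simp [Finset.mul_sum])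
    calc (∑ i, ∑ k, R (e i) (e k) (A (e k)) (A (e i)))
        = ∑ i, B2 (e i) (e i) := Finset.sum_congr rfl fun i _ => by
          simpa [B2] using inner_cb (e i)
      _ = ∑ a, B2 (v a) (v a) := (sum_diag_eq e v B2).symm
      _ = ∑ a, ∑ b, R (v a) (v b) (A (v b)) (A (v a)) := by simp [B2]
  have hquad3 : ∀ a b, R (v a) (v b) (A (v b)) (A (v a)) = -(lam a * lam b * s a b) := by
    intro a b
    have h2 : R (v a) (v b) (v b) (v a) = - s a b := by
      rw [hR2 (v a) (v b) (v b) (v a)]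
    rw [hv a, hv b]
    simp only [map_smul, smul_eq_mul, LinearMap.smul_apply]
    rw [h2]
    ring
  have hquad : (∑ i, ∑ j, ∑ k, ∑ l, R (e i) (e k) (e l) (e j) * φ (e k) (e l) * φ (e i) (e j))
      = ∑ a, ∑ b, -(lam a * lam b * s a b) := by
    rw [hquad1, hquad2]
    exact Finset.sum_congr rfl fun a _ => Finset.sum_congr rfl fun b _ => hquad3 a b
  -- the algebraic identity and inequalities
  set S : ℝ := ∑ a, lam a ^ 2 with hSdef
  set P : ℝ := ∑ a, lam a ^ 2 * (∑ b, s b a) with hPdef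
  have hPeq : (∑ a, lam a ^ 2 * (∑ m, R (e m) (v a) (e m) (v a))) = P := by
    exact Finset.sum_congr rfl fun a _ => by rw [hric a]
  have hD1 : (∑ a, ∑ b, s a b * (lam a * lam a)) = P := by
    refine Finset.sum_congr rfl fun a _ => ?_
    rw [← Finset.sum_mul]
    have h : (∑ b, s a b) = ∑ b, s b a := Finset.sum_congr rfl fun b _ => hssymm a b
    rw [h]
    ring
  have hD2 : (∑ a, ∑ b, s a b * (lam b * lam b)) = P := by
    rw [Finset.sum_comm]
    refine Finset.sum_congr rfl fun b _ => ?_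
    rw [← Finset.sum_mul]
    ring
  have key1 : (∑ a, ∑ b, -(lam a * lam b * s a b))
      = (∑ a, ∑ b, s a b * (lam a - lam b) ^ 2) / 2 - P := by
    have split : ∀ a b : Fin n, -(lam a * lam b * s a b)
        = s a b * (lam a - lam b) ^ 2 / 2 - s a b * (lam a * lam a) / 2
          - s a b * (lam b * lam b) / 2 := by intros; ring
    calc (∑ a, ∑ b, -(lam a * lam b * s a b))
        = ∑ a, ∑ b, (s a b * (lam a - lam b) ^ 2 / 2 - s a b * (lam a * lam a) / 2
            - s a b * (lam b * lam b) / 2) :=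
          Finset.sum_congr rfl fun a _ => Finset.sum_congr rfl fun b _ => split a b
      _ = (∑ a, ∑ b, s a b * (lam a - lam b) ^ 2) / 2
            - (∑ a, ∑ b, s a b * (lam a * lam a)) / 2
            - (∑ a, ∑ b, s a b * (lam b * lam b)) / 2 := by
          simp [Finset.sum_sub_distrib, Finset.sum_div]
      _ = (∑ a, ∑ b, s a b * (lam a - lam b) ^ 2) / 2 - P := by
          rw [hD1, hD2]; ring
  have key2 : 2 * ((n : ℝ) * α * S) ≤ ∑ a, ∑ b, s a b * (lam a - lam b) ^ 2 := by
    have hbound : (∑ a, ∑ b, α * (lam a - lam b) ^ 2) ≤ ∑ a, ∑ b, s a b * (lam a - lam b) ^ 2 := by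
      refine Finset.sum_le_sum fun a _ => Finset.sum_le_sum fun b _ => ?_
      rcases eq_or_ne a b with h | h
      · subst h; simp
      · exact mul_le_mul_of_nonneg_right (hsge a b h) (sq_nonneg _)
    have hper : ∀ a, (∑ b, (lam a - lam b) ^ 2) = (n : ℝ) * lam a ^ 2 + S := by
      intro a
      have h0 : ∀ b : Fin n, (lam a - lam b) ^ 2
          = lam a ^ 2 - 2 * lam a * lam b + lam b ^ 2 := fun b => by ring
      simp only [h0]
      rw [Finset.sum_add_distrib, Finset.sum_sub_distrib, ← Finset.mul_sum, htr0,
        Finset.sum_const, Finset.card_univ]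
      simp [hSdef]
    have hcomp : (∑ a, ∑ b, α * (lam a - lam b) ^ 2) = 2 * ((n : ℝ) * α * S) := by
      calc (∑ a, ∑ b, α * (lam a - lam b) ^ 2)
          = ∑ a, α * ∑ b, (lam a - lam b) ^ 2 := by
            exact Finset.sum_congr rfl fun a _ => (Finset.mul_sum _ _ _).symm
        _ = ∑ a, α * ((n : ℝ) * lam a ^ 2 + S) := by
            exact Finset.sum_congr rfl fun a _ => by rw [hper a]
        _ = α * (n : ℝ) * S + (n : ℝ) * (α * S) := by
            have h1 : ∀ a : Fin n, α * ((n : ℝ) * lam a ^ 2 + S)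
                = α * (n : ℝ) * lam a ^ 2 + α * S := fun a => by ring
            simp only [h1]
            rw [Finset.sum_add_distrib, ← Finset.mul_sum, ← hSdef, Finset.sum_const,
              Finset.card_univ]
            simp [nsmul_eq_mul]
        _ = 2 * ((n : ℝ) * α * S) := by ring
    linarith
  rw [hquad, key1, hPeq]
  linarith

/-- **Lemma 1, algebraic form.** Let `α > 0` and `sec ≥ α`.
If `Ric(X,X) < n α ‖X‖²` for every nonzero `X`, then `Q̊(φ) > 0` for every nonzero
traceless symmetric bilinear form `φ`; if instead `Ric(X,X) ≤ n α ‖X‖²` for every `X`,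
then `Q̊(φ) ≥ 0` for every traceless symmetric bilinear form `φ`.  Here
`Ric(X,Y) = Σ_m R(e_m,X,e_m,Y)` and
`Q̊(φ) = Σ_{i,j,k,l} R(e_i,e_k,e_l,e_j) φ(e_k,e_l) φ(e_i,e_j)`. -/
theorem stmt_4
    {E : Type*} [NormedAddCommGroup E] [InnerProductSpace ℝ E]
    {n : ℕ} (hn : 2 ≤ n) (e : OrthonormalBasis (Fin n) ℝ E)
    (R : E →ₗ[ℝ] E →ₗ[ℝ] E →ₗ[ℝ] E →ₗ[ℝ] ℝ)
    (hR1 : ∀ X Y Z W : E, R X Y Z W = - R Y X Z W)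
    (hR2 : ∀ X Y Z W : E, R X Y Z W = - R X Y W Z)
    (hR3 : ∀ X Y Z W : E, R X Y Z W = R Z W X Y)
    (hR4 : ∀ X Y Z W : E, R X Y Z W + R Y Z X W + R Z X Y W = 0)
    (α : ℝ) (hα : 0 < α)
    (hsec : ∀ X Y : E, α * (‖X‖ ^ 2 * ‖Y‖ ^ 2 - ⟪X, Y⟫ ^ 2) ≤ R X Y X Y) :
    ((∀ X : E, X ≠ 0 → (∑ m, R (e m) X (e m) X) < (n : ℝ) * α * ‖X‖ ^ 2) →
      ∀ φ : E →ₗ[ℝ] E →ₗ[ℝ] ℝ, (∀ X Y : E, φ X Y = φ Y X) →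
        (∑ i, φ (e i) (e i)) = 0 → φ ≠ 0 →
        0 < ∑ i, ∑ j, ∑ k, ∑ l, R (e i) (e k) (e l) (e j) * φ (e k) (e l) * φ (e i) (e j)) ∧
    ((∀ X : E, (∑ m, R (e m) X (e m) X) ≤ (n : ℝ) * α * ‖X‖ ^ 2) →
      ∀ φ : E →ₗ[ℝ] E →ₗ[ℝ] ℝ, (∀ X Y : E, φ X Y = φ Y X) →
        (∑ i, φ (e i) (e i)) = 0 →
        0 ≤ ∑ i, ∑ j, ∑ k, ∑ l, R (e i) (e k) (e l) (e j) * φ (e k) (e l) * φ (e i) (e j)) := by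
  constructor
  · intro hRic φ hsymm htr hne
    obtain ⟨lam, v, hvnorm, hlamne, hineq⟩ := stmt4_core e R hR1 hR2 α hsec φ hsymm htr
    obtain ⟨a0, ha0⟩ := hlamne hne
    have hvsq : ∀ a, ‖v a‖ ^ 2 = 1 := fun a => by rw [hvnorm a]; norm_num
    have hvne : ∀ a, v a ≠ 0 := fun a => by
      intro h; have h2 := hvnorm a; rw [h, norm_zero] at h2; norm_num at h2
    have hstrict : (∑ a, lam a ^ 2 * (∑ m, R (e m) (v a) (e m) (v a)))
        < ∑ a, lam a ^ 2 * ((n : ℝ) * α) := by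
      apply Finset.sum_lt_sum
      · intro a _
        have h := hRic (v a) (hvne a)
        rw [hvsq a, mul_one] at h
        exact mul_le_mul_of_nonneg_left (le_of_lt h) (sq_nonneg _)
      · refine ⟨a0, Finset.mem_univ _, ?_⟩
        have h := hRic (v a0) (hvne a0)
        rw [hvsq a0, mul_one] at h
        exact mul_lt_mul_of_pos_left h (by positivity)
    have hsum : (∑ a, lam a ^ 2 * ((n : ℝ) * α)) = (n : ℝ) * α * (∑ a, lam a ^ 2) := by
      rw [← Finset.sum_mul]; ring
    linarith
  · intro hRic φ hsymm htr
    obtain ⟨lam, v, hvnorm, _, hineq⟩ := stmt4_core e R hR1 hR2 α hsec φ hsymm htr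
    have hvsq : ∀ a, ‖v a‖ ^ 2 = 1 := fun a => by rw [hvnorm a]; norm_num
    have hle : (∑ a, lam a ^ 2 * (∑ m, R (e m) (v a) (e m) (v a)))
        ≤ ∑ a, lam a ^ 2 * ((n : ℝ) * α) := by
      refine Finset.sum_le_sum fun a _ => ?_
      have h := hRic (v a)
      rw [hvsq a, mul_one] at h
      exact mul_le_mul_of_nonneg_left h (sq_nonneg _)
    have hsum : (∑ a, lam a ^ 2 * ((n : ℝ) * α)) = (n : ℝ) * α * (∑ a, lam a ^ 2) := by
      rw [← Finset.sum_mul]; ring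
    linarith
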